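/- For hotspot destination traffic on wavelength Λ, conditioned on |F_Λ| = ℓ ≥ 1, the probability that the chosen largest gap starts at node 0 satisfies (1/(ℓ+1))·(1 - 1/(ℓη)) ≤ q_β^ℓ(G_Λ = 0) ≤ (1/(ℓ+1))·(1 + 1/η). -/

import Mathlib

noncomputable section

/-- The node reached from `x` by moving `d` segments clockwise on an `N`-node ring. -/
def wrap {N : ℕ} (x : Fin N) (d : ℕ) : Fin N := ⟨(x.1 + d) % N, Nat.mod_lt _ x.pos⟩

/-- The clockwise gap at node `x` with respect to the active set `A`:
the distance from `x` to the next active node clockwise. -/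
def gapLen {N : ℕ} (A : Finset (Fin N)) (x : Fin N) : ℕ :=
  sInf {d : ℕ | 0 < d ∧ wrap x d ∈ A}

/-- The length of the largest gap of the active set `A`. -/
def maxGap {N : ℕ} (A : Finset (Fin N)) : ℕ := A.sup (gapLen A)

/-- The set of active nodes at which a gap of maximal length starts (clockwise). -/
def maxSet {N : ℕ} (A : Finset (Fin N)) : Finset (Fin N) :=
  A.filter (fun x => gapLen A x = maxGap A)

/-- Clockwise hop distance from `a` to `b`. -/
def dCw {N : ℕ} (a b : Fin N) : ℕ := (b.1 + N - a.1) % N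

/-- Probability (over the uniform tie-break among maximal gaps) that the chosen
largest gap of active set `A` starts (clockwise) at node `g`. -/
def clgStartProb {N : ℕ} (A : Finset (Fin N)) (g : Fin N) : ℚ :=
  if g ∈ maxSet A then 1 / ((maxSet A).card : ℚ) else 0

/-- Probability (over the uniform tie-break among maximal gaps) that the clockwise
segment entering node `m` is traversed under shortest-path routing, when the
active set is `A` and the sender is `S`: the clockwise copy travels from `S` to the
start of the chosen largest gap. -/
def segUseProb {N : ℕ} (A : Finset (Fin N)) (S m : Fin N) : ℚ :=
  (((maxSet A).filter (fun g => 1 ≤ dCw S m ∧ dCw S m ≤ dCw S g)).card : ℚ) /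
    ((maxSet A).card : ℚ)

/-- The nodes of an `N`-node ring homed on wavelength `lam` (out of `Λ` wavelengths):
those whose index is congruent to `lam` modulo `Λ`. -/
def homed (N Λ lam : ℕ) : Finset (Fin N) :=
  Finset.univ.filter (fun i => i.1 % Λ = lam % Λ)

end

section Part1
variable {N : ℕ}

lemma wrap_val (x : Fin N) (d : ℕ) : (wrap x d).1 = (x.1 + d) % N := rfl

lemma wrap_wrap (x : Fin N) (c d : ℕ) : wrap (wrap x c) d = wrap x (c + d) := by
  apply Fin.ext
  simp only [wrap_val]
  rw [Nat.mod_add_mod, Nat.add_assoc]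

lemma wrap_zero (x : Fin N) : wrap x 0 = x := by
  apply Fin.ext; simp [wrap_val, Nat.mod_eq_of_lt x.isLt]

lemma wrap_N (x : Fin N) : wrap x N = x := by
  apply Fin.ext; simp [wrap_val, Nat.add_mod_right, Nat.mod_eq_of_lt x.isLt]

lemma wrap_add_N (x : Fin N) (d : ℕ) : wrap x (d + N) = wrap x d := by
  rw [← wrap_wrap, wrap_N]  -- wrap (wrap x d) N?  careful

lemma wrap_eq_wrap {x : Fin N} {d e : ℕ} : wrap x d = wrap x e ↔ d % N = e % N := by
  rw [Fin.ext_iff]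
  simp only [wrap_val]
  constructor
  · intro h; exact Nat.ModEq.add_left_cancel' x.1 h
  · intro h; exact Nat.ModEq.add_left x.1 h

lemma wrap_base_inj {x y : Fin N} {d : ℕ} (h : wrap x d = wrap y d) : x = y := by
  have : (x.1 + d) % N = (y.1 + d) % N := by rw [Fin.ext_iff] at h; exact h
  have h2 : x.1 % N = y.1 % N := Nat.ModEq.add_right_cancel' d this
  rwa [Nat.mod_eq_of_lt x.isLt, Nat.mod_eq_of_lt y.isLt, ← Fin.ext_iff] at h2

lemma dCw_lt (a b : Fin N) : dCw a b < N := Nat.mod_lt _ a.pos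

lemma wrap_dCw (a b : Fin N) : wrap a (dCw a b) = b := by
  apply Fin.ext
  simp only [wrap_val, dCw]
  rw [Nat.add_mod, Nat.mod_mod, ← Nat.add_mod]
  have h1 : a.1 + (b.1 + N - a.1) = b.1 + N := by omega
  rw [h1, Nat.add_mod_right, Nat.mod_eq_of_lt b.isLt]

lemma dCw_pos {a b : Fin N} (h : a ≠ b) : 0 < dCw a b := by
  rcases Nat.eq_zero_or_pos (dCw a b) with h0 | h0
  · exfalso; apply h; have := wrap_dCw a b; rw [h0, wrap_zero] at this; exact this
  · exact h0

lemma wrap_eq_iff {x a : Fin N} {d : ℕ} : wrap x d = a ↔ d % N = dCw x a := by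
  conv_lhs => rw [← wrap_dCw x a]
  rw [wrap_eq_wrap, Nat.mod_eq_of_lt (dCw_lt x a)]

lemma gapSet_nonempty {A : Finset (Fin N)} (hA : A.Nonempty) (x : Fin N) :
    {d : ℕ | 0 < d ∧ wrap x d ∈ A}.Nonempty := by
  obtain ⟨a, ha⟩ := hA
  by_cases hax : a = x
  · exact ⟨N, x.pos, by rw [wrap_N]; exact hax ▸ ha⟩
  · exact ⟨dCw x a, dCw_pos (fun h => hax h.symm), by rw [wrap_dCw]; exact ha⟩

lemma gapLen_pos {A : Finset (Fin N)} (hA : A.Nonempty) (x : Fin N) : 0 < gapLen A x :=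
  (Nat.sInf_mem (gapSet_nonempty hA x)).1

lemma gapLen_mem {A : Finset (Fin N)} (hA : A.Nonempty) (x : Fin N) :
    wrap x (gapLen A x) ∈ A :=
  (Nat.sInf_mem (gapSet_nonempty hA x)).2

lemma gapLen_le {A : Finset (Fin N)} {x : Fin N} {d : ℕ} (hd : 0 < d) (h : wrap x d ∈ A) :
    gapLen A x ≤ d := Nat.sInf_le ⟨hd, h⟩

lemma gapLen_min {A : Finset (Fin N)} {x : Fin N} {d : ℕ} (hd : 0 < d)
    (h : d < gapLen A x) : wrap x d ∉ A := fun hm => absurd (gapLen_le hd hm) (by omega)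

lemma gapLen_le_N {A : Finset (Fin N)} (hA : A.Nonempty) (x : Fin N) : gapLen A x ≤ N := by
  obtain ⟨a, ha⟩ := hA
  by_cases hax : a = x
  · exact gapLen_le x.pos (by rw [wrap_N]; exact hax ▸ ha)
  · exact le_trans (gapLen_le (dCw_pos (fun h => hax h.symm)) (by rw [wrap_dCw]; exact ha))
      (le_of_lt (dCw_lt x a))

/-- distance backwards from `x` to the previous element of `F`. -/
noncomputable def bGap (F : Finset (Fin N)) (x : Fin N) : ℕ :=
  sInf {d : ℕ | 0 < d ∧ wrap x (N - d) ∈ F}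

lemma bSet_nonempty {F : Finset (Fin N)} (hF : F.Nonempty) {x : Fin N} (hx : x ∉ F) :
    {d : ℕ | 0 < d ∧ wrap x (N - d) ∈ F}.Nonempty := by
  obtain ⟨a, ha⟩ := hF
  have hax : a ≠ x := fun h => hx (h ▸ ha)
  refine ⟨N - dCw x a, by have := dCw_lt x a; have := dCw_pos (fun h : x = a => hax h.symm); omega, ?_⟩
  have h1 : N - (N - dCw x a) = dCw x a := by have := dCw_lt x a; omega
  rw [h1, wrap_dCw]; exact ha

variable {F : Finset (Fin N)} {x : Fin N}

lemma bGap_pos (hF : F.Nonempty) (hx : x ∉ F) : 0 < bGap F x :=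
  (Nat.sInf_mem (bSet_nonempty hF hx)).1

lemma bGap_mem (hF : F.Nonempty) (hx : x ∉ F) : wrap x (N - bGap F x) ∈ F :=
  (Nat.sInf_mem (bSet_nonempty hF hx)).2

lemma bGap_le {d : ℕ} (hd : 0 < d) (h : wrap x (N - d) ∈ F) : bGap F x ≤ d :=
  Nat.sInf_le ⟨hd, h⟩

lemma bGap_min {d : ℕ} (hd : 0 < d) (hlt : d < bGap F x) : wrap x (N - d) ∉ F :=
  fun hm => absurd (bGap_le hd hm) (by omega)

lemma bGap_lt_N (hF : F.Nonempty) (hx : x ∉ F) : bGap F x < N := by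
  obtain ⟨a, ha⟩ := hF
  have hax : a ≠ x := fun h => hx (h ▸ ha)
  have h1 : bGap F x ≤ N - dCw x a := bGap_le
    (by have := dCw_lt x a; have := dCw_pos (fun h : x = a => hax h.symm); omega)
    (by rw [show N - (N - dCw x a) = dCw x a by have := dCw_lt x a; omega, wrap_dCw]; exact ha)
  have h2 : bGap F x ≠ N := by
    intro h
    have := bGap_mem ⟨a, ha⟩ hx
    rw [h, Nat.sub_self, wrap_zero] at this
    exact hx this
  have := dCw_pos (fun h : x = a => hax h.symm)
  omega

/-- the previous element of `F` strictly before `x`. -/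
noncomputable def prevP (F : Finset (Fin N)) (x : Fin N) : Fin N := wrap x (N - bGap F x)

lemma prevP_mem (hF : F.Nonempty) (hx : x ∉ F) : prevP F x ∈ F := bGap_mem hF hx

lemma gapLen_prevP (hF : F.Nonempty) (hx : x ∉ F) :
    gapLen F (prevP F x) = bGap F x + gapLen F x := by
  set k := bGap F x with hk
  set b := gapLen F x with hb
  have hkN : k < N := bGap_lt_N hF hx
  have hbpos : 0 < b := gapLen_pos hF x
  have hbN : b ≤ N := gapLen_le_N hF x
  have hkpos : 0 < k := bGap_pos hF hx
  have hle : gapLen F (prevP F x) ≤ k + b := by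
    apply gapLen_le (by omega)
    rw [prevP, wrap_wrap, show N - k + (k + b) = b + N by omega, wrap_add_N]
    exact gapLen_mem hF x
  rcases lt_trichotomy (gapLen F (prevP F x)) (k + b) with h | h | h
  · exfalso
    set g := gapLen F (prevP F x) with hg
    have hgpos : 0 < g := gapLen_pos hF _
    have hgmem : wrap (prevP F x) g ∈ F := gapLen_mem hF _
    rw [prevP, wrap_wrap] at hgmem
    rcases lt_trichotomy g k with h1 | h1 | h1
    · have he : N - k + g = N - (k - g) := by omega
      rw [he] at hgmem
      exact bGap_min (by omega) (by omega) hgmem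
    · rw [show N - k + g = N by omega, wrap_N] at hgmem
      exact hx hgmem
    · rw [show N - k + g = (g - k) + N by omega, wrap_add_N] at hgmem
      exact gapLen_min (by omega) (by omega) hgmem
  · exact h
  · omega

lemma dCw_prevP (hF : F.Nonempty) (hx : x ∉ F) : dCw (prevP F x) x = bGap F x := by
  have hkN : bGap F x < N := bGap_lt_N hF hx
  have h1 : wrap (prevP F x) (bGap F x) = x := by
    rw [prevP, wrap_wrap, show N - bGap F x + bGap F x = N by omega, wrap_N]
  rw [wrap_eq_iff] at h1
  rw [← h1, Nat.mod_eq_of_lt hkN]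

lemma gapLen_insert_of_ne {a : Fin N} (hF : F.Nonempty) (hax : a ≠ x) :
    gapLen (insert x F) a = min (gapLen F a) (dCw a x) := by
  apply le_antisymm
  · apply le_min
    · exact gapLen_le (gapLen_pos hF a) (Finset.mem_insert_of_mem (gapLen_mem hF a))
    · exact gapLen_le (dCw_pos hax) (by rw [wrap_dCw]; exact Finset.mem_insert_self x F)
  · have hne : (insert x F).Nonempty := Finset.insert_nonempty x F
    have hmem := gapLen_mem hne a
    have hpos := gapLen_pos hne a
    rcases Finset.mem_insert.mp hmem with h | h
    · rw [wrap_eq_iff] at h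
      rcases lt_or_ge (gapLen (insert x F) a) N with hlt | hge
      · rw [Nat.mod_eq_of_lt hlt] at h
        exact le_trans (min_le_right _ _) (le_of_eq h.symm)
      · exact le_trans (min_le_right _ _) (le_trans (le_of_lt (dCw_lt a x)) hge)
    · exact le_trans (min_le_left _ _) (gapLen_le hpos h)

lemma gapLen_insert_self (hF : F.Nonempty) (hx : x ∉ F) :
    gapLen (insert x F) x = gapLen F x := by
  apply le_antisymm
  · exact gapLen_le (gapLen_pos hF x) (Finset.mem_insert_of_mem (gapLen_mem hF x))
  · have hne : (insert x F).Nonempty := Finset.insert_nonempty x F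
    have hmem := gapLen_mem hne x
    have hpos := gapLen_pos hne x
    rcases Finset.mem_insert.mp hmem with h | h
    · have h0 : wrap x (gapLen (insert x F) x) = wrap x 0 := by rw [wrap_zero]; exact h
      rw [wrap_eq_wrap] at h0
      simp only [Nat.zero_mod] at h0
      have : N ≤ gapLen (insert x F) x := by
        rcases lt_or_ge (gapLen (insert x F) x) N with hlt | hge
        · rw [Nat.mod_eq_of_lt hlt] at h0; omega
        · exact hge
      exact le_trans (gapLen_le_N hF x) this
    · exact gapLen_le hpos h

lemma gapLen_insert_prevP (hF : F.Nonempty) (hx : x ∉ F) :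
    gapLen (insert x F) (prevP F x) = bGap F x := by
  have hp : prevP F x ≠ x := fun h => hx (h ▸ prevP_mem hF hx)
  rw [gapLen_insert_of_ne hF hp, dCw_prevP hF hx, gapLen_prevP hF hx]
  have := gapLen_pos hF x
  omega

lemma gapLen_insert_other {a : Fin N} (hF : F.Nonempty) (hx : x ∉ F)
    (ha : a ∈ F) (hap : a ≠ prevP F x) : gapLen (insert x F) a = gapLen F a := by
  have hax : a ≠ x := fun h => hx (h ▸ ha)
  rw [gapLen_insert_of_ne hF hax]
  rcases le_or_gt (gapLen F a) (dCw a x) with h | h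
  · omega
  · exfalso
    set t := dCw a x with ht
    have htpos : 0 < t := dCw_pos hax
    have htN : t < N := dCw_lt a x
    have hwx : wrap a t = x := wrap_dCw a x
    have hkt : bGap F x ≤ t := by
      apply bGap_le htpos
      rw [← hwx, wrap_wrap, show t + (N - t) = N by omega, wrap_N]
      exact ha
    set k := bGap F x with hk
    rcases eq_or_lt_of_le hkt with he | hlt
    · apply hap
      rw [prevP, ← hk, he, ← hwx, wrap_wrap, show t + (N - t) = N by omega, wrap_N]
    · have hkN : k < N := hk ▸ bGap_lt_N hF hx
      have hp : prevP F x = wrap a (t - k) := by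
        rw [prevP, ← hk, ← hwx, wrap_wrap, show t + (N - k) = (t - k) + N by omega, wrap_add_N]
      have hmem : wrap a (t - k) ∈ F := hp ▸ prevP_mem hF hx
      exact gapLen_min (by omega) (by omega) hmem

lemma shift_facts (hF : F.Nonempty) {y : Fin N} (hy : y ∉ F) {r : ℕ} (hr : 0 < r)
    (hrb : r < bGap F y) :
    wrap y (N - r) ∉ F ∧ bGap F (wrap y (N - r)) = bGap F y - r ∧
      prevP F (wrap y (N - r)) = prevP F y ∧
      gapLen F (wrap y (N - r)) = gapLen F y + r := by
  set x := wrap y (N - r) with hxdef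
  have hkyN : bGap F y < N := bGap_lt_N hF hy
  have hxF : x ∉ F := bGap_min hr hrb
  have hb1 : bGap F x ≤ bGap F y - r := by
    apply bGap_le (by omega)
    rw [hxdef, wrap_wrap, show N - r + (N - (bGap F y - r)) = (N - bGap F y) + N by omega,
      wrap_add_N]
    exact bGap_mem hF hy
  have hb2 : bGap F x = bGap F y - r := by
    rcases lt_or_ge (bGap F x) (bGap F y - r) with hlt | hge
    · exfalso
      have hdpos : 0 < bGap F x := bGap_pos hF hxF
      have hmem : wrap x (N - bGap F x) ∈ F := bGap_mem hF hxF
      rw [hxdef, wrap_wrap,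
        show N - r + (N - bGap F x) = (N - (r + bGap F x)) + N by omega, wrap_add_N] at hmem
      exact bGap_min (by omega) (by omega) hmem
    · omega
  have hp : prevP F x = prevP F y := by
    rw [prevP, prevP, hb2, hxdef, wrap_wrap,
      show N - r + (N - (bGap F y - r)) = (N - bGap F y) + N by omega, wrap_add_N]
  have hg : gapLen F x = gapLen F y + r := by
    have h1 := gapLen_prevP hF hy
    have h2 := gapLen_prevP hF hxF
    rw [hp, h1, hb2] at h2
    omega
  exact ⟨hxF, hb2, hp, hg⟩

lemma shift_strict (hF : F.Nonempty) {y : Fin N} (hy : y ∉ F) {r : ℕ} (hr : 0 < r)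
    (hrb : r < bGap F y)
    (hmax : ∀ a ∈ F, gapLen (insert y F) a ≤ gapLen (insert y F) y) :
    ∀ a ∈ F, gapLen (insert (wrap y (N - r)) F) a
      < gapLen (insert (wrap y (N - r)) F) (wrap y (N - r)) := by
  obtain ⟨hxF, hb2, hp, hg⟩ := shift_facts hF hy hr hrb
  set x := wrap y (N - r) with hxdef
  have hyins : gapLen (insert y F) y = gapLen F y := gapLen_insert_self hF hy
  have hky_le : bGap F y ≤ gapLen F y := by
    have := hmax (prevP F y) (prevP_mem hF hy)
    rwa [gapLen_insert_prevP hF hy, hyins] at this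
  have hxins : gapLen (insert x F) x = gapLen F x := gapLen_insert_self hF hxF
  intro a ha
  rw [hxins, hg]
  by_cases hap : a = prevP F x
  · rw [hap, gapLen_insert_prevP hF hxF, hb2]
    omega
  · rw [gapLen_insert_other hF hxF ha hap]
    have h1 : gapLen (insert y F) a = gapLen F a := by
      by_cases hap' : a = prevP F y
      · exfalso; exact hap (by rw [hp, ← hap'])
      · exact gapLen_insert_other hF hy ha hap'
    have h2 := hmax a ha
    rw [hyins, h1] at h2
    omega

lemma maxSet_eq_singleton {A : Finset (Fin N)} {x : Fin N} (hx : x ∈ A)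
    (h : ∀ a ∈ A, a ≠ x → gapLen A a < gapLen A x) : maxSet A = {x} := by
  have hmg : maxGap A = gapLen A x := by
    apply le_antisymm
    · apply Finset.sup_le
      intro a ha
      by_cases hax : a = x
      · rw [hax]
      · exact le_of_lt (h a ha hax)
    · exact Finset.le_sup hx
  ext a
  simp only [maxSet, Finset.mem_filter, Finset.mem_singleton]
  constructor
  · rintro ⟨ha, hga⟩
    by_contra hax
    have := h a ha hax
    omega
  · rintro rfl
    exact ⟨hx, hmg.symm⟩

lemma clg_of_maxSet_singleton {A : Finset (Fin N)} {x : Fin N} (h : maxSet A = {x}) :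
    clgStartProb A x = 1 := by
  rw [clgStartProb, h]
  simp

lemma clg_nonneg (A : Finset (Fin N)) (g : Fin N) : 0 ≤ clgStartProb A g := by
  rw [clgStartProb]
  split
  · positivity
  · exact le_refl 0

lemma clg_le_one (A : Finset (Fin N)) (g : Fin N) : clgStartProb A g ≤ 1 := by
  rw [clgStartProb]
  split
  · rename_i h
    have hc : 1 ≤ (maxSet A).card := Finset.card_pos.mpr ⟨g, h⟩
    rw [div_le_one (by exact_mod_cast Nat.lt_of_lt_of_le Nat.zero_lt_one hc)]
    exact_mod_cast hc
  · exact zero_le_one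

lemma clg_eq_zero {A : Finset (Fin N)} {g : Fin N} (h : g ∉ maxSet A) :
    clgStartProb A g = 0 := by rw [clgStartProb, if_neg h]

lemma maxSet_nonempty {A : Finset (Fin N)} (hA : A.Nonempty) : (maxSet A).Nonempty := by
  obtain ⟨a, ha, hsup⟩ := Finset.exists_mem_eq_sup A hA (gapLen A)
  exact ⟨a, Finset.mem_filter.mpr ⟨ha, hsup.symm⟩⟩

lemma maxSet_subset (A : Finset (Fin N)) : maxSet A ⊆ A := Finset.filter_subset _ _

lemma sum_clg {A : Finset (Fin N)} (hA : A.Nonempty) :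
    ∑ a ∈ A, clgStartProb A a = 1 := by
  have hms := maxSet_nonempty hA
  have hcard : 0 < (maxSet A).card := Finset.card_pos.mpr hms
  rw [← Finset.sum_subset (maxSet_subset A) (fun a _ ha => clg_eq_zero ha)]
  have : ∀ a ∈ maxSet A, clgStartProb A a = 1 / ((maxSet A).card : ℚ) := by
    intro a ha; rw [clgStartProb, if_pos ha]
  rw [Finset.sum_congr rfl this, Finset.sum_const, nsmul_eq_mul]
  field_simp

end Part1

section Part2
variable {N : ℕ}

lemma rot_inj (c : ℕ) : Function.Injective (fun w : Fin N => wrap w c) :=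
  fun _ _ h => wrap_base_inj h

lemma wrap_comm (w : Fin N) (c d : ℕ) : wrap (wrap w c) d = wrap (wrap w d) c := by
  rw [wrap_wrap, wrap_wrap, Nat.add_comm]

lemma gapLen_image (A : Finset (Fin N)) (c : ℕ) (x : Fin N) :
    gapLen (A.image (fun w => wrap w c)) (wrap x c) = gapLen A x := by
  unfold gapLen
  congr 1
  ext d
  simp only [Set.mem_setOf_eq, and_congr_right_iff]
  intro _
  rw [wrap_comm]
  exact (rot_inj c).mem_finset_image

lemma maxGap_image (A : Finset (Fin N)) (c : ℕ) :
    maxGap (A.image (fun w => wrap w c)) = maxGap A := by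
  unfold maxGap
  rw [Finset.sup_image]
  apply Finset.sup_congr rfl
  intro a _
  exact gapLen_image A c a

lemma maxSet_image (A : Finset (Fin N)) (c : ℕ) :
    maxSet (A.image (fun w => wrap w c)) = (maxSet A).image (fun w => wrap w c) := by
  unfold maxSet
  rw [Finset.filter_image]
  congr 1
  apply Finset.filter_congr
  intro w hw
  rw [gapLen_image A c w, maxGap_image A c]

lemma clg_image (A : Finset (Fin N)) (c : ℕ) (g : Fin N) :
    clgStartProb (A.image (fun w => wrap w c)) (wrap g c) = clgStartProb A g := by
  unfold clgStartProb
  rw [maxSet_image, Finset.card_image_of_injective _ (rot_inj c)]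
  congr 1
  simp only [eq_iff_iff]
  exact (rot_inj c).mem_finset_image

end Part2

section Homed
variable {N Λ η : ℕ}

lemma mem_homed_iff {z : Fin N} (hΛ : 0 < Λ) : z ∈ homed N Λ Λ ↔ z.1 % Λ = 0 := by
  unfold homed
  simp [Nat.mod_self]

lemma z0_mem_homed (hNpos : 0 < N) (hΛ : 0 < Λ) : (⟨0, hNpos⟩ : Fin N) ∈ homed N Λ Λ := by
  rw [mem_homed_iff hΛ]
  simp

lemma wrap_mem_homed_iff (hN : N = η * Λ) (hΛ : 0 < Λ) {z : Fin N} {c : ℕ} (hc : Λ ∣ c) :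
    wrap z c ∈ homed N Λ Λ ↔ z ∈ homed N Λ Λ := by
  rw [mem_homed_iff hΛ, mem_homed_iff hΛ, wrap_val]
  have hdvd : Λ ∣ N := hN ▸ Dvd.intro_left η rfl
  rw [Nat.mod_mod_of_dvd _ hdvd]
  obtain ⟨m, rfl⟩ := hc
  rw [Nat.mul_comm, Nat.add_mul_mod_self_right]

lemma card_homed (hN : N = η * Λ) (hNpos : 0 < N) (hΛ : 0 < Λ) :
    (homed N Λ Λ).card = η := by
  have hη : 0 < η := by
    rcases Nat.eq_zero_or_pos η with h | h
    · subst h; simp at hN; omega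
    · exact h
  classical
  have : homed N Λ Λ = (Finset.univ : Finset (Fin η)).image
      (fun j => (⟨j.1 * Λ, by rw [hN]; exact (Nat.mul_lt_mul_right hΛ).mpr j.isLt⟩ : Fin N)) := by
    ext z
    rw [mem_homed_iff hΛ]
    simp only [Finset.mem_image, Finset.mem_univ, true_and]
    constructor
    · intro h
      obtain ⟨q, hq⟩ := (Nat.dvd_of_mod_eq_zero h)
      have hqη : q < η := by
        have h2 : z.1 < η * Λ := hN ▸ z.isLt
        rw [hq] at h2
        by_contra hcon
        push_neg at hcon
        have : η * Λ ≤ Λ * q := Nat.mul_le_mul_right Λ hcon |>.trans (le_of_eq (Nat.mul_comm q Λ))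
        omega
      exact ⟨⟨q, hqη⟩, by apply Fin.ext; simp [hq, Nat.mul_comm]⟩
    · rintro ⟨j, rfl⟩
      simp [Nat.mul_mod_left]
  rw [this, Finset.card_image_of_injective _ ?_, Finset.card_univ, Fintype.card_fin]
  intro i j hij
  have : i.1 * Λ = j.1 * Λ := congrArg Fin.val hij
  exact Fin.ext (Nat.eq_of_mul_eq_mul_right hΛ this)

end Homed

section Step6
variable {N Λ η : ℕ}

lemma mod_wrap_back (hΛ : 0 < Λ) (hdvd : Λ ∣ N) {z : Fin N} {d : ℕ} (hd : d < Λ) :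
    (wrap z (N - d)).1 % Λ = (z.1 % Λ + Λ - d) % Λ := by
  obtain ⟨n, hn⟩ := hdvd
  have hnpos : 1 ≤ n := by
    rcases Nat.eq_zero_or_pos n with h | h
    · exfalso; rw [h, Nat.mul_zero] at hn; have := z.pos; omega
    · exact h
  have hq : Λ * (z.1 / Λ) + z.1 % Λ = z.1 := Nat.div_add_mod z.1 Λ
  have htΛ : z.1 % Λ < Λ := Nat.mod_lt _ hΛ
  have hval : (wrap z (N - d)).1 = (z.1 + (N - d)) % N := rfl
  have hmul : Λ * (z.1 / Λ + (n - 1)) = Λ * (z.1 / Λ) + (Λ * n - Λ) := by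
    rw [Nat.mul_add, Nat.mul_sub, Nat.mul_one]
  have hΛn : Λ ≤ Λ * n := Nat.le_mul_of_pos_right Λ hnpos
  have he : z.1 + (N - d) = (z.1 % Λ + Λ - d) + Λ * (z.1 / Λ + (n - 1)) := by
    omega
  rw [hval, Nat.mod_mod_of_dvd _ ⟨n, hn⟩, he, Nat.add_mul_mod_self_left]

lemma homed_back (hN : N = η * Λ) (hΛ : 0 < Λ) {s : Fin N} (hs : s.1 % Λ = 0) {d : ℕ}
    (hd1 : 0 < d) (hd2 : d < Λ) : (wrap s (N - d)).1 % Λ = Λ - d := by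
  rw [mod_wrap_back hΛ (hN ▸ Dvd.intro_left η rfl) hd2, hs, Nat.zero_add,
    Nat.mod_eq_of_lt (by omega)]

lemma offset_back (hN : N = η * Λ) (hΛ : 0 < Λ) {x : Fin N} {d : ℕ}
    (hd : d ≤ x.1 % Λ) : (wrap x (N - d)).1 % Λ = x.1 % Λ - d := by
  have hr : x.1 % Λ < Λ := Nat.mod_lt _ hΛ
  rw [mod_wrap_back hΛ (hN ▸ Dvd.intro_left η rfl) (by omega),
    show x.1 % Λ + Λ - d = (x.1 % Λ - d) + Λ by omega, Nat.add_mod_right,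
    Nat.mod_eq_of_lt (by omega)]

variable {F : Finset (Fin N)}

lemma bGap_gt_of_homed (hN : N = η * Λ) (hΛ : 0 < Λ) (hF : F.Nonempty)
    (hFH : F ⊆ homed N Λ Λ) {s : Fin N} (hs : s.1 % Λ = 0) (hsF : s ∉ F) {r : ℕ}
    (hrΛ : r < Λ) : r < bGap F s := by
  by_contra hcon
  push_neg at hcon
  have h1 : 0 < bGap F s := bGap_pos hF hsF
  have h2 : wrap s (N - bGap F s) ∈ F := bGap_mem hF hsF
  have h3 : (wrap s (N - bGap F s)).1 % Λ = Λ - bGap F s :=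
    homed_back hN hΛ hs h1 (by omega)
  have h4 := hFH h2
  rw [mem_homed_iff hΛ] at h4
  omega

/-- Core lemma A/B: shifting a weakly-maximal inserted point backwards past
nothing of `F` produces a strictly maximal inserted point. -/
lemma shifted_singleton (hF : F.Nonempty) {y : Fin N} (hy : y ∉ F) {r : ℕ} (hr : 0 < r)
    (hrb : r < bGap F y) (hmaxy : y ∈ maxSet (insert y F)) :
    maxSet (insert (wrap y (N - r)) F) = {wrap y (N - r)} := by
  have hmax : ∀ a ∈ F, gapLen (insert y F) a ≤ gapLen (insert y F) y := by
    intro a ha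
    have h1 : gapLen (insert y F) y = maxGap (insert y F) :=
      (Finset.mem_filter.mp hmaxy).2
    rw [h1]
    exact Finset.le_sup (Finset.mem_insert_of_mem ha)
  have hstrict := shift_strict hF hy hr hrb hmax
  apply maxSet_eq_singleton (Finset.mem_insert_self _ _)
  intro a ha hax
  rcases Finset.mem_insert.mp ha with h | h
  · exact absurd h hax
  · exact hstrict a h

lemma step6_lower (hN : N = η * Λ) (hΛ : 0 < Λ) (hF : F.Nonempty)
    (hFH : F ⊆ homed N Λ Λ) :
    ((Λ : ℚ) - 1) * (∑ s ∈ homed N Λ Λ \ F, clgStartProb (insert s F) s)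
      ≤ ∑ x ∈ Finset.univ \ homed N Λ Λ, clgStartProb (insert x F) x := by
  classical
  set H := homed N Λ Λ with hHdef
  set P1 := (H \ F).filter (fun s => s ∈ maxSet (insert s F)) with hP1
  -- bound the homed sum by the count of weakly maximal insertions
  have hDH : (∑ s ∈ H \ F, clgStartProb (insert s F) s) ≤ (P1.card : ℚ) := by
    have h1 : ∀ s ∈ H \ F, clgStartProb (insert s F) s
        ≤ (if s ∈ maxSet (insert s F) then (1 : ℚ) else 0) := by
      intro s _
      split
      · exact clg_le_one _ _
      · exact le_of_eq (clg_eq_zero (by assumption))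
    calc (∑ s ∈ H \ F, clgStartProb (insert s F) s)
        ≤ ∑ s ∈ H \ F, (if s ∈ maxSet (insert s F) then (1 : ℚ) else 0) :=
          Finset.sum_le_sum h1
      _ = (P1.card : ℚ) := by rw [Finset.sum_boole]
  -- the image of strictly maximal shifted points
  have hpair : ∀ s ∈ P1, ∀ r ∈ Finset.Ico 1 Λ,
      (wrap s (N - r)).1 % Λ = Λ - r ∧
        maxSet (insert (wrap s (N - r)) F) = {wrap s (N - r)} := by
    intro s hs r hrmem
    rw [hP1, Finset.mem_filter, Finset.mem_sdiff] at hs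
    obtain ⟨⟨hsH, hsF⟩, hsmax⟩ := hs
    rw [Finset.mem_Ico] at hrmem
    have hs0 : s.1 % Λ = 0 := (mem_homed_iff hΛ).mp hsH
    have hrb : r < bGap F s := bGap_gt_of_homed hN hΛ hF hFH hs0 hsF hrmem.2
    exact ⟨homed_back hN hΛ hs0 (by omega) hrmem.2,
      shifted_singleton hF hsF (by omega) hrb hsmax⟩
  set T := (P1 ×ˢ Finset.Ico 1 Λ).image (fun pr : Fin N × ℕ => wrap pr.1 (N - pr.2)) with hT
  have hinj : Set.InjOn (fun pr : Fin N × ℕ => wrap pr.1 (N - pr.2))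
      ↑(P1 ×ˢ Finset.Ico 1 Λ) := by
    intro p hp p' hp' heq
    rw [Finset.mem_coe, Finset.mem_product] at hp hp'
    have e1 := (hpair p.1 hp.1 p.2 hp.2).1
    have e2 := (hpair p'.1 hp'.1 p'.2 hp'.2).1
    simp only at heq
    have hr : p.2 = p'.2 := by
      rw [heq] at e1
      rw [e1] at e2
      have m1 := hp.2
      have m2 := hp'.2
      rw [Finset.mem_Ico] at m1 m2
      omega
    have hs : p.1 = p'.1 := by
      rw [hr] at heq
      exact wrap_base_inj heq
    exact Prod.ext hs hr
  have hTcardN : T.card = P1.card * (Λ - 1) := by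
    rw [hT, Finset.card_image_of_injOn hinj, Finset.card_product, Nat.card_Ico]
  have hTcard : (T.card : ℚ) = (P1.card : ℚ) * ((Λ : ℚ) - 1) := by
    rw [hTcardN, Nat.cast_mul, Nat.cast_sub hΛ, Nat.cast_one]
  have hTsub : T ⊆ Finset.univ \ H := by
    intro x hx
    rw [hT, Finset.mem_image] at hx
    obtain ⟨p, hp, rfl⟩ := hx
    rw [Finset.mem_product] at hp
    have e1 := (hpair p.1 hp.1 p.2 hp.2).1
    have m1 := hp.2
    rw [Finset.mem_Ico] at m1
    rw [Finset.mem_sdiff]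
    refine ⟨Finset.mem_univ _, ?_⟩
    rw [hHdef, mem_homed_iff hΛ]
    omega
  have hTone : ∀ x ∈ T, clgStartProb (insert x F) x = 1 := by
    intro x hx
    rw [hT, Finset.mem_image] at hx
    obtain ⟨p, hp, rfl⟩ := hx
    rw [Finset.mem_product] at hp
    exact clg_of_maxSet_singleton (hpair p.1 hp.1 p.2 hp.2).2
  calc ((Λ : ℚ) - 1) * (∑ s ∈ H \ F, clgStartProb (insert s F) s)
      ≤ ((Λ : ℚ) - 1) * (P1.card : ℚ) := by
        apply mul_le_mul_of_nonneg_left hDH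
        have : (1 : ℚ) ≤ (Λ : ℚ) := by exact_mod_cast hΛ
        linarith
    _ = (T.card : ℚ) := by rw [hTcard]; ring
    _ = ∑ x ∈ T, clgStartProb (insert x F) x := by
        rw [Finset.sum_congr rfl hTone, Finset.sum_const, nsmul_eq_mul, mul_one]
    _ ≤ ∑ x ∈ Finset.univ \ H, clgStartProb (insert x F) x := by
        apply Finset.sum_le_sum_of_subset_of_nonneg hTsub
        intro i _ _
        exact clg_nonneg _ _

end Step6

section Step6U
variable {N Λ η : ℕ} {F : Finset (Fin N)}

lemma strict_argmax_card (hF : F.Nonempty) :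
    (F.filter (fun s => ∀ a ∈ F, a ≠ s → gapLen F a < gapLen F s)).card ≤ 1 := by
  apply Finset.card_le_one.mpr
  intro s hs s' hs'
  rw [Finset.mem_filter] at hs hs'
  by_contra hne
  have h1 := hs.2 s' hs'.1 (fun h => hne h.symm)
  have h2 := hs'.2 s hs.1 hne
  omega

lemma step6_upper (hN : N = η * Λ) (hΛ : 0 < Λ) (hF : F.Nonempty)
    (hFH : F ⊆ homed N Λ Λ) :
    ∑ x ∈ Finset.univ \ homed N Λ Λ, clgStartProb (insert x F) x
      ≤ ((Λ : ℚ) - 1) * ((∑ s ∈ homed N Λ Λ \ F, clgStartProb (insert s F) s) + 1) := by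
  classical
  set H := homed N Λ Λ with hHdef
  set Q := (Finset.univ \ H).filter (fun x => x ∈ maxSet (insert x F)) with hQ
  -- the nonhomed sum is at most the count of weakly maximal insertions
  have hD : (∑ x ∈ Finset.univ \ H, clgStartProb (insert x F) x) ≤ (Q.card : ℚ) := by
    have h1 : ∀ x ∈ Finset.univ \ H, clgStartProb (insert x F) x
        ≤ (if x ∈ maxSet (insert x F) then (1 : ℚ) else 0) := by
      intro x _
      split
      · exact clg_le_one _ _
      · exact le_of_eq (clg_eq_zero (by assumption))
    calc (∑ x ∈ Finset.univ \ H, clgStartProb (insert x F) x)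
        ≤ ∑ x ∈ Finset.univ \ H, (if x ∈ maxSet (insert x F) then (1 : ℚ) else 0) :=
          Finset.sum_le_sum h1
      _ = (Q.card : ℚ) := by rw [Finset.sum_boole]
  set σ : Fin N → Fin N := fun x => wrap x (N - x.1 % Λ) with hσ
  have hxQ : ∀ x ∈ Q, x.1 % Λ ≠ 0 ∧ x ∉ F ∧ x ∈ maxSet (insert x F) := by
    intro x hx
    rw [hQ, Finset.mem_filter, Finset.mem_sdiff] at hx
    have hnh : x ∉ H := hx.1.2
    rw [hHdef, mem_homed_iff hΛ] at hnh
    exact ⟨hnh, fun hmem => hx.1.2 (hFH hmem), hx.2⟩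
  have hback : ∀ x ∈ Q, x.1 % Λ ≤ bGap F x := by
    intro x hx
    obtain ⟨hr0, hxF, _⟩ := hxQ x hx
    by_contra hcon
    push_neg at hcon
    have h1 : 0 < bGap F x := bGap_pos hF hxF
    have h2 : wrap x (N - bGap F x) ∈ F := bGap_mem hF hxF
    have h3 : (wrap x (N - bGap F x)).1 % Λ = x.1 % Λ - bGap F x :=
      offset_back hN hΛ (le_of_lt hcon)
    have h4 := hFH h2
    rw [mem_homed_iff hΛ] at h4
    omega
  have hrecover : ∀ x ∈ Q, wrap (σ x) (x.1 % Λ) = x := by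
    intro x hx
    have hrN : x.1 % Λ ≤ N := le_trans (le_of_lt (Nat.mod_lt _ hΛ))
      (by rw [hN]; exact Nat.le_mul_of_pos_left Λ (by
        rcases Nat.eq_zero_or_pos η with h | h
        · exfalso; have := x.pos; rw [hN, h, Nat.zero_mul] at this; omega
        · exact h))
    rw [hσ]
    simp only
    rw [wrap_wrap, show N - x.1 % Λ + x.1 % Λ = N by omega, wrap_N]
  -- fibers of σ on Q have at most Λ - 1 elements
  have hfib : ∀ s ∈ Q.image σ, (Q.filter (fun x => σ x = s)).card ≤ Λ - 1 := by
    intro s _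
    have : (Q.filter (fun x => σ x = s)).card ≤ (Finset.Ico 1 Λ).card := by
      apply Finset.card_le_card_of_injOn (fun x => x.1 % Λ)
      · intro x hx
        rw [Finset.mem_coe, Finset.mem_filter] at hx
        have := (hxQ x hx.1).1
        rw [Finset.mem_coe, Finset.mem_Ico]
        exact ⟨Nat.pos_of_ne_zero this, Nat.mod_lt _ hΛ⟩
      · intro x hx x' hx' hrr
        rw [Finset.mem_coe, Finset.mem_filter] at hx hx'
        have e1 := hrecover x hx.1
        have e2 := hrecover x' hx'.1
        have hrr' : x.1 % Λ = x'.1 % Λ := hrr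
        rw [← e1, ← e2, hx.2, hx'.2, hrr']
    rwa [Nat.card_Ico] at this
  have hQcard : Q.card ≤ (Λ - 1) * (Q.image σ).card :=
    Finset.card_le_mul_card_image Q (Λ - 1) hfib
  -- classify the image points
  set G1 := (H \ F).filter (fun s => maxSet (insert s F) = {s}) with hG1
  set SA := F.filter (fun s => ∀ a ∈ F, a ≠ s → gapLen F a < gapLen F s) with hSA
  have himg : Q.image σ ⊆ G1 ∪ SA := by
    intro s hs
    rw [Finset.mem_image] at hs
    obtain ⟨x, hx, rfl⟩ := hs
    obtain ⟨hr0, hxF, hxmax⟩ := hxQ x hx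
    have hrΛ : x.1 % Λ < Λ := Nat.mod_lt _ hΛ
    have hsH : (σ x).1 % Λ = 0 := by
      rw [hσ]
      simp only
      rw [offset_back hN hΛ (le_refl _)]
      omega
    have hrb := hback x hx
    by_cases hsF : σ x ∈ F
    · -- s ∈ F : strict argmax of F
      apply Finset.mem_union_right
      rw [hSA, Finset.mem_filter]
      refine ⟨hsF, ?_⟩
      have hbeq : bGap F x = x.1 % Λ := by
        apply le_antisymm _ hrb
        apply bGap_le (by omega)
        exact hsF
      have hprev : prevP F x = σ x := by rw [prevP, hbeq, hσ]
      have hglen : gapLen F (σ x) = x.1 % Λ + gapLen F x := by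
        rw [← hprev, gapLen_prevP hF hxF, hbeq]
      intro a ha hane
      have h1 : gapLen (insert x F) a = gapLen F a :=
        gapLen_insert_other hF hxF ha (by rw [hprev]; exact hane)
      have h2 : gapLen (insert x F) a ≤ gapLen (insert x F) x := by
        have hmg : gapLen (insert x F) x = maxGap (insert x F) :=
          (Finset.mem_filter.mp hxmax).2
        rw [hmg]
        exact Finset.le_sup (Finset.mem_insert_of_mem ha)
      rw [gapLen_insert_self hF hxF] at h2
      omega
    · -- s ∉ F : strictly maximal insertion
      apply Finset.mem_union_left
      rw [hG1, Finset.mem_filter, Finset.mem_sdiff]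
      have hrblt : x.1 % Λ < bGap F x := by
        rcases lt_or_eq_of_le hrb with h | h
        · exact h
        · exfalso
          apply hsF
          rw [hσ]
          simp only
          rw [h]
          exact prevP_mem hF hxF
      refine ⟨⟨?_, hsF⟩, ?_⟩
      · rw [hHdef, mem_homed_iff hΛ]; exact hsH
      · have := shifted_singleton hF hxF (by omega) hrblt hxmax
        rw [hσ]
        exact this
  have hmax1 : SA.card ≤ 1 := strict_argmax_card hF
  have himgcard : (Q.image σ).card ≤ G1.card + 1 := by
    calc (Q.image σ).card ≤ (G1 ∪ SA).card := Finset.card_le_card himg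
      _ ≤ G1.card + SA.card := Finset.card_union_le _ _
      _ ≤ G1.card + 1 := by omega
  -- G1 contributes 1 each to the homed sum
  have hG1sum : (G1.card : ℚ) ≤ ∑ s ∈ H \ F, clgStartProb (insert s F) s := by
    have hsub : G1 ⊆ H \ F := Finset.filter_subset _ _
    have hone : ∀ s ∈ G1, clgStartProb (insert s F) s = 1 := by
      intro s hs
      rw [hG1, Finset.mem_filter] at hs
      exact clg_of_maxSet_singleton hs.2
    calc (G1.card : ℚ) = ∑ s ∈ G1, clgStartProb (insert s F) s := by
          rw [Finset.sum_congr rfl hone, Finset.sum_const, nsmul_eq_mul, mul_one]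
      _ ≤ ∑ s ∈ H \ F, clgStartProb (insert s F) s :=
          Finset.sum_le_sum_of_subset_of_nonneg hsub (fun i _ _ => clg_nonneg _ _)
  -- assemble
  have hchain : (Q.card : ℚ) ≤ ((Λ : ℚ) - 1) * ((G1.card : ℚ) + 1) := by
    have h1 : (Q.card : ℚ) ≤ ((Λ - 1 : ℕ) : ℚ) * ((Q.image σ).card : ℚ) := by
      exact_mod_cast hQcard
    have h2 : ((Q.image σ).card : ℚ) ≤ (G1.card : ℚ) + 1 := by exact_mod_cast himgcard
    have h3 : ((Λ - 1 : ℕ) : ℚ) = (Λ : ℚ) - 1 := by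
      rw [Nat.cast_sub hΛ, Nat.cast_one]
    rw [h3] at h1
    have hΛ1 : (0 : ℚ) ≤ (Λ : ℚ) - 1 := by
      have : (1 : ℚ) ≤ (Λ : ℚ) := by exact_mod_cast hΛ
      linarith
    calc (Q.card : ℚ) ≤ ((Λ : ℚ) - 1) * ((Q.image σ).card : ℚ) := h1
      _ ≤ ((Λ : ℚ) - 1) * ((G1.card : ℚ) + 1) := by
          apply mul_le_mul_of_nonneg_left h2 hΛ1
  calc (∑ x ∈ Finset.univ \ H, clgStartProb (insert x F) x) ≤ (Q.card : ℚ) := hD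
    _ ≤ ((Λ : ℚ) - 1) * ((G1.card : ℚ) + 1) := hchain
    _ ≤ ((Λ : ℚ) - 1) * ((∑ s ∈ H \ F, clgStartProb (insert s F) s) + 1) := by
        apply mul_le_mul_of_nonneg_left _ (by
          have : (1 : ℚ) ≤ (Λ : ℚ) := by exact_mod_cast hΛ
          linarith)
        linarith [hG1sum]

end Step6U

section Part5
variable {N Λ η : ℕ}

lemma sum_clg_powerset (m : ℕ) (hm : 0 < m) (T : Finset (Fin N)) :
    ∑ A ∈ T.powersetCard m, ∑ s ∈ A, clgStartProb A s = ((T.powersetCard m).card : ℚ) := by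
  rw [Finset.card_eq_sum_ones, Nat.cast_sum]
  apply Finset.sum_congr rfl
  intro A hA
  rw [Finset.mem_powersetCard] at hA
  have hAne : A.Nonempty := Finset.card_pos.mp (by omega)
  rw [sum_clg hAne, Nat.cast_one]

lemma sum_insert_pairs (T : Finset (Fin N)) (k : ℕ) :
    ∑ F ∈ T.powersetCard k, ∑ s ∈ T \ F, clgStartProb (insert s F) s
      = ∑ A ∈ T.powersetCard (k + 1), ∑ s ∈ A, clgStartProb A s := by
  classical
  rw [Finset.sum_sigma' (T.powersetCard k) (fun F => T \ F)
      (fun F s => clgStartProb (insert s F) s),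
    Finset.sum_sigma' (T.powersetCard (k + 1)) (fun A => A) (fun A s => clgStartProb A s)]
  apply Finset.sum_nbij' (i := fun p => (⟨insert p.2 p.1, p.2⟩ : Σ _ : Finset (Fin N), Fin N))
    (j := fun p => (⟨p.1.erase p.2, p.2⟩ : Σ _ : Finset (Fin N), Fin N))
  · rintro ⟨F, s⟩ hp
    rw [Finset.mem_sigma, Finset.mem_powersetCard] at hp
    obtain ⟨⟨hsub, hcard⟩, hs⟩ := hp
    rw [Finset.mem_sdiff] at hs
    rw [Finset.mem_sigma, Finset.mem_powersetCard]
    refine ⟨⟨Finset.insert_subset hs.1 hsub, ?_⟩, Finset.mem_insert_self _ _⟩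
    rw [Finset.card_insert_of_notMem hs.2, hcard]
  · rintro ⟨A, s⟩ hp
    rw [Finset.mem_sigma, Finset.mem_powersetCard] at hp
    obtain ⟨⟨hsub, hcard⟩, hs⟩ := hp
    rw [Finset.mem_sigma, Finset.mem_powersetCard]
    refine ⟨⟨le_trans (Finset.erase_subset _ _) hsub, ?_⟩, ?_⟩
    · rw [Finset.card_erase_of_mem hs, hcard]; omega
    · rw [Finset.mem_sdiff]
      exact ⟨hsub hs, Finset.notMem_erase _ _⟩
  · rintro ⟨F, s⟩ hp
    rw [Finset.mem_sigma, Finset.mem_powersetCard] at hp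
    have hs := hp.2
    rw [Finset.mem_sdiff] at hs
    simp only [Sigma.mk.inj_iff, heq_eq_eq]
    exact ⟨Finset.erase_insert hs.2, trivial⟩
  · rintro ⟨A, s⟩ hp
    rw [Finset.mem_sigma] at hp
    simp only [Sigma.mk.inj_iff, heq_eq_eq]
    exact ⟨Finset.insert_erase hp.2, trivial⟩
  · rintro ⟨F, s⟩ _
    rfl

lemma swap_filter (T : Finset (Fin N)) (m : ℕ) (g : Finset (Fin N) → Fin N → ℚ) :
    ∑ z ∈ T, ∑ A ∈ (T.powersetCard m).filter (fun A => z ∈ A), g A z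
      = ∑ A ∈ T.powersetCard m, ∑ z ∈ A, g A z := by
  classical
  have h1 : ∀ z ∈ T, ∑ A ∈ (T.powersetCard m).filter (fun A => z ∈ A), g A z
      = ∑ A ∈ T.powersetCard m, if z ∈ A then g A z else 0 := fun z _ =>
    Finset.sum_filter _ _
  rw [Finset.sum_congr rfl h1, Finset.sum_comm]
  apply Finset.sum_congr rfl
  intro A hA
  rw [Finset.mem_powersetCard] at hA
  rw [← Finset.sum_filter, Finset.filter_mem_eq_inter, Finset.inter_eq_right.mpr hA.1]

/-- Reindex pairs (sender, destination set) as (active set, sender). -/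
lemma sum_pairs_z0 (H : Finset (Fin N)) (z0 : Fin N) (hz0 : z0 ∈ H) (ℓ : ℕ) :
    ∑ S ∈ H.erase z0, ∑ F ∈ ((H.erase S).powersetCard ℓ).filter (fun F => z0 ∈ F),
        clgStartProb (insert S F) z0
      = ∑ A ∈ (H.powersetCard (ℓ + 1)).filter (fun A => z0 ∈ A),
          ∑ S ∈ A.erase z0, clgStartProb A z0 := by
  classical
  rw [Finset.sum_sigma' (H.erase z0)
      (fun S => ((H.erase S).powersetCard ℓ).filter (fun F => z0 ∈ F))
      (fun S F => clgStartProb (insert S F) z0),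
    Finset.sum_sigma' ((H.powersetCard (ℓ + 1)).filter (fun A => z0 ∈ A))
      (fun A => A.erase z0) (fun A S => clgStartProb A z0)]
  apply Finset.sum_nbij'
    (i := fun p => (⟨insert p.1 p.2, p.1⟩ : Σ _ : Finset (Fin N), Fin N))
    (j := fun p => (⟨p.2, p.1.erase p.2⟩ : Σ _ : Fin N, Finset (Fin N)))
  · rintro ⟨S, F⟩ hp
    rw [Finset.mem_sigma, Finset.mem_erase, Finset.mem_filter, Finset.mem_powersetCard] at hp
    obtain ⟨⟨hSz0, hSH⟩, ⟨⟨hsub, hcard⟩, hz0F⟩⟩ := hp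
    have hSF : S ∉ F := fun h => (Finset.mem_erase.mp (hsub h)).1 rfl
    rw [Finset.mem_sigma, Finset.mem_filter, Finset.mem_powersetCard]
    refine ⟨⟨⟨Finset.insert_subset hSH (le_trans hsub (Finset.erase_subset _ _)), ?_⟩,
      Finset.mem_insert_of_mem hz0F⟩, ?_⟩
    · rw [Finset.card_insert_of_notMem hSF, hcard]
    · rw [Finset.mem_erase]
      exact ⟨hSz0, Finset.mem_insert_self _ _⟩
  · rintro ⟨A, S⟩ hp
    rw [Finset.mem_sigma, Finset.mem_filter, Finset.mem_powersetCard, Finset.mem_erase] at hp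
    obtain ⟨⟨⟨hsub, hcard⟩, hz0A⟩, hSz0, hSA⟩ := hp
    rw [Finset.mem_sigma, Finset.mem_erase, Finset.mem_filter, Finset.mem_powersetCard]
    refine ⟨⟨hSz0, hsub hSA⟩, ⟨⟨?_, ?_⟩, ?_⟩⟩
    · intro x hx
      rw [Finset.mem_erase] at hx ⊢
      exact ⟨fun h => hx.1 (h ▸ rfl), hsub hx.2⟩
    · rw [Finset.card_erase_of_mem hSA, hcard]; omega
    · rw [Finset.mem_erase]
      exact ⟨fun h => hSz0 h.symm, hz0A⟩
  · rintro ⟨S, F⟩ hp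
    rw [Finset.mem_sigma, Finset.mem_erase, Finset.mem_filter, Finset.mem_powersetCard] at hp
    have hSF : S ∉ F := fun h => (Finset.mem_erase.mp (hp.2.1.1 h)).1 rfl
    have he : (insert S F).erase S = F := Finset.erase_insert hSF
    simp [he]
  · rintro ⟨A, S⟩ hp
    rw [Finset.mem_sigma, Finset.mem_erase] at hp
    have he : insert S (A.erase S) = A := Finset.insert_erase hp.2.2
    simp [he]
  · rintro ⟨S, F⟩ _
    rfl

/-- cardinality of the filtered powerset. -/
lemma card_filter_powerset (T : Finset (Fin N)) (a : Fin N) (ha : a ∈ T) (k : ℕ) :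
    ((T.powersetCard (k + 1)).filter (fun F => a ∈ F)).card
      = (T.erase a).card.choose k := by
  classical
  rw [← Finset.card_powersetCard]
  apply Finset.card_nbij' (i := fun F => F.erase a) (j := fun G => insert a G)
  · intro F hF
    rw [Finset.mem_coe, Finset.mem_filter, Finset.mem_powersetCard] at hF
    rw [Finset.mem_coe, Finset.mem_powersetCard]
    constructor
    · intro x hx
      rw [Finset.mem_erase] at hx ⊢
      exact ⟨hx.1, hF.1.1 hx.2⟩
    · rw [Finset.card_erase_of_mem hF.2, hF.1.2]; omega
  · intro G hG
    rw [Finset.mem_coe, Finset.mem_powersetCard] at hG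
    have haG : a ∉ G := fun h => (Finset.mem_erase.mp (hG.1 h)).1 rfl
    rw [Finset.mem_coe, Finset.mem_filter, Finset.mem_powersetCard]
    refine ⟨⟨Finset.insert_subset ha (le_trans hG.1 (Finset.erase_subset _ _)), ?_⟩,
      Finset.mem_insert_self _ _⟩
    rw [Finset.card_insert_of_notMem haG, hG.2]
  · intro F hF
    rw [Finset.mem_coe, Finset.mem_filter] at hF
    exact Finset.insert_erase hF.2
  · intro G hG
    rw [Finset.mem_coe, Finset.mem_powersetCard] at hG
    have haG : a ∉ G := fun h => (Finset.mem_erase.mp (hG.1 h)).1 rfl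
    exact Finset.erase_insert haG

lemma image_wrap_cancel (c : ℕ) (hcN : c ≤ N) (W : Finset (Fin N)) :
    (W.image (fun w => wrap w c)).image (fun w => wrap w (N - c)) = W := by
  classical
  rw [Finset.image_image,
    show ((fun w : Fin N => wrap w (N - c)) ∘ (fun w => wrap w c)) = id from
      funext fun w => by
        simp only [Function.comp_apply, id_eq, wrap_wrap]
        rw [show c + (N - c) = N by omega, wrap_N],
    Finset.image_id]

lemma image_wrap_cancel' (c : ℕ) (hcN : c ≤ N) (W : Finset (Fin N)) :
    (W.image (fun w => wrap w (N - c))).image (fun w => wrap w c) = W := by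
  classical
  rw [Finset.image_image,
    show ((fun w : Fin N => wrap w c) ∘ (fun w => wrap w (N - c))) = id from
      funext fun w => by
        simp only [Function.comp_apply, id_eq, wrap_wrap]
        rw [show N - c + c = N by omega, wrap_N],
    Finset.image_id]

variable {ℓ : ℕ}

lemma rot_filter_sum (hN : N = η * Λ) (hNpos : 0 < N) (hΛ : 0 < Λ) (m : ℕ)
    {z : Fin N} (hz : z ∈ homed N Λ Λ) :
    ∑ A ∈ ((homed N Λ Λ).powersetCard m).filter (fun A => (⟨0, hNpos⟩ : Fin N) ∈ A),
        clgStartProb A ⟨0, hNpos⟩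
      = ∑ A ∈ ((homed N Λ Λ).powersetCard m).filter (fun A => z ∈ A),
          clgStartProb A z := by
  classical
  set z0 : Fin N := ⟨0, hNpos⟩ with hz0
  set c := z.1 with hc
  have hcdvd : Λ ∣ c := Nat.dvd_of_mod_eq_zero ((mem_homed_iff hΛ).mp hz)
  have hcN : c < N := z.isLt
  have hNdvd : Λ ∣ N := hN ▸ Dvd.intro_left η rfl
  have hwz0 : wrap z0 c = z := by
    apply Fin.ext
    simp only [wrap_val, hz0, Nat.zero_add]
    exact Nat.mod_eq_of_lt hcN
  have hmemH : ∀ w : Fin N, wrap w c ∈ homed N Λ Λ ↔ w ∈ homed N Λ Λ :=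
    fun w => wrap_mem_homed_iff hN hΛ hcdvd
  have hmemH' : ∀ w : Fin N, wrap w (N - c) ∈ homed N Λ Λ ↔ w ∈ homed N Λ Λ :=
    fun w => wrap_mem_homed_iff hN hΛ (Nat.dvd_sub hNdvd hcdvd)
  apply Finset.sum_nbij' (i := fun A => A.image (fun w => wrap w c))
    (j := fun A => A.image (fun w => wrap w (N - c)))
  · intro A hA
    rw [Finset.mem_filter, Finset.mem_powersetCard] at hA
    rw [Finset.mem_filter, Finset.mem_powersetCard]
    refine ⟨⟨?_, ?_⟩, ?_⟩
    · intro x hx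
      rw [Finset.mem_image] at hx
      obtain ⟨a, ha, rfl⟩ := hx
      exact (hmemH a).mpr (hA.1.1 ha)
    · rw [Finset.card_image_of_injective _ (rot_inj c), hA.1.2]
    · rw [← hwz0]
      exact Finset.mem_image_of_mem _ hA.2
  · intro A hA
    rw [Finset.mem_filter, Finset.mem_powersetCard] at hA
    rw [Finset.mem_filter, Finset.mem_powersetCard]
    refine ⟨⟨?_, ?_⟩, ?_⟩
    · intro x hx
      rw [Finset.mem_image] at hx
      obtain ⟨a, ha, rfl⟩ := hx
      exact (hmemH' a).mpr (hA.1.1 ha)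
    · rw [Finset.card_image_of_injective _ (rot_inj (N - c)), hA.1.2]
    · have : wrap z (N - c) = z0 := by
        apply Fin.ext
        simp only [wrap_val, hz0]
        rw [show z.1 + (N - c) = N by omega, Nat.mod_self]
      rw [← this]
      exact Finset.mem_image_of_mem _ hA.2
  · intro A _
    exact image_wrap_cancel c (le_of_lt hcN) A
  · intro A _
    exact image_wrap_cancel' c (le_of_lt hcN) A
  · intro A _
    rw [← hwz0, clg_image]

lemma rot_pair_sum (hN : N = η * Λ) (hNpos : 0 < N) (hΛ : 0 < Λ) (ℓ : ℕ)
    {z : Fin N} (hz : z ∈ homed N Λ Λ) :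
    ∑ S ∈ Finset.univ \ homed N Λ Λ,
        ∑ F ∈ ((homed N Λ Λ).powersetCard ℓ).filter (fun F => (⟨0, hNpos⟩ : Fin N) ∈ F),
          clgStartProb (insert S F) ⟨0, hNpos⟩
      = ∑ S ∈ Finset.univ \ homed N Λ Λ,
          ∑ F ∈ ((homed N Λ Λ).powersetCard ℓ).filter (fun F => z ∈ F),
            clgStartProb (insert S F) z := by
  classical
  set z0 : Fin N := ⟨0, hNpos⟩ with hz0
  set c := z.1 with hc
  have hcdvd : Λ ∣ c := Nat.dvd_of_mod_eq_zero ((mem_homed_iff hΛ).mp hz)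
  have hcN : c < N := z.isLt
  have hNdvd : Λ ∣ N := hN ▸ Dvd.intro_left η rfl
  have hwz0 : wrap z0 c = z := by
    apply Fin.ext
    simp only [wrap_val, hz0, Nat.zero_add]
    exact Nat.mod_eq_of_lt hcN
  have hmemH : ∀ w : Fin N, wrap w c ∈ homed N Λ Λ ↔ w ∈ homed N Λ Λ :=
    fun w => wrap_mem_homed_iff hN hΛ hcdvd
  have hmemH' : ∀ w : Fin N, wrap w (N - c) ∈ homed N Λ Λ ↔ w ∈ homed N Λ Λ :=
    fun w => wrap_mem_homed_iff hN hΛ (Nat.dvd_sub hNdvd hcdvd)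
  rw [Finset.sum_sigma' (Finset.univ \ homed N Λ Λ) _
      (fun S F => clgStartProb (insert S F) z0),
    Finset.sum_sigma' (Finset.univ \ homed N Λ Λ) _
      (fun S F => clgStartProb (insert S F) z)]
  apply Finset.sum_nbij'
    (i := fun p => (⟨wrap p.1 c, p.2.image (fun w => wrap w c)⟩ :
      Σ _ : Fin N, Finset (Fin N)))
    (j := fun p => (⟨wrap p.1 (N - c), p.2.image (fun w => wrap w (N - c))⟩ :
      Σ _ : Fin N, Finset (Fin N)))
  · rintro ⟨S, F⟩ hp
    rw [Finset.mem_sigma, Finset.mem_sdiff, Finset.mem_filter, Finset.mem_powersetCard] at hp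
    rw [Finset.mem_sigma, Finset.mem_sdiff, Finset.mem_filter, Finset.mem_powersetCard]
    refine ⟨⟨Finset.mem_univ _, fun h => hp.1.2 ((hmemH S).mp h)⟩, ⟨⟨?_, ?_⟩, ?_⟩⟩
    · intro x hx
      rw [Finset.mem_image] at hx
      obtain ⟨a, ha, rfl⟩ := hx
      exact (hmemH a).mpr (hp.2.1.1 ha)
    · rw [Finset.card_image_of_injective _ (rot_inj c), hp.2.1.2]
    · rw [← hwz0]
      exact Finset.mem_image_of_mem _ hp.2.2
  · rintro ⟨S, F⟩ hp
    rw [Finset.mem_sigma, Finset.mem_sdiff, Finset.mem_filter, Finset.mem_powersetCard] at hp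
    rw [Finset.mem_sigma, Finset.mem_sdiff, Finset.mem_filter, Finset.mem_powersetCard]
    refine ⟨⟨Finset.mem_univ _, fun h => hp.1.2 ((hmemH' S).mp h)⟩, ⟨⟨?_, ?_⟩, ?_⟩⟩
    · intro x hx
      rw [Finset.mem_image] at hx
      obtain ⟨a, ha, rfl⟩ := hx
      exact (hmemH' a).mpr (hp.2.1.1 ha)
    · rw [Finset.card_image_of_injective _ (rot_inj (N - c)), hp.2.1.2]
    · have hzz : wrap z (N - c) = z0 := by
        apply Fin.ext
        simp only [wrap_val, hz0]
        rw [show z.1 + (N - c) = N by omega, Nat.mod_self]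
      rw [← hzz]
      exact Finset.mem_image_of_mem _ hp.2.2
  · rintro ⟨S, F⟩ _
    have h1 : wrap (wrap S c) (N - c) = S := by
      rw [wrap_wrap, show c + (N - c) = N by omega, wrap_N]
    have h2 := image_wrap_cancel c (le_of_lt hcN) F
    simp [h1, h2]
  · rintro ⟨S, F⟩ _
    have h1 : wrap (wrap S (N - c)) c = S := by
      rw [wrap_wrap, show N - c + c = N by omega, wrap_N]
    have h2 := image_wrap_cancel' c (le_of_lt hcN) F
    simp [h1, h2]
  · rintro ⟨S, F⟩ _
    simp only
    rw [show insert (wrap S c) (F.image (fun w => wrap w c))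
        = (insert S F).image (fun w => wrap w c) from (Finset.image_insert _ _ _).symm,
      ← hwz0, clg_image]

end Part5

noncomputable section
/-- Hotspot destination traffic on wavelength `Λ` (homed nodes are
the multiples of `Λ`, including the hotspot `0`): the sender `S` is uniform on the
other `N - 1` nodes and, conditioned on `|F_Λ| = ℓ`, the destination set `F_Λ` is a
uniformly random `ℓ`-subset of the homed nodes other than `S` containing `0`.
Then `(1/(ℓ+1))·(1 - 1/(ℓη)) ≤ q_β^ℓ(G_Λ = 0) ≤ (1/(ℓ+1))·(1 + 1/η)`. -/
theorem stmt10 (N Λ η ℓ : ℕ) (hN : N = η * Λ) (hNpos : 0 < N) (hΛ : 0 < Λ)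
    (hη : 2 ≤ η) (hℓ1 : 1 ≤ ℓ) (hℓη : ℓ ≤ η - 1) :
    (1 / (ℓ + 1) : ℚ) * (1 - 1 / ((ℓ : ℚ) * η))
      ≤ (∑ S ∈ Finset.univ.erase (⟨0, hNpos⟩ : Fin N),
          (∑ F ∈ (((homed N Λ Λ).erase S).powersetCard ℓ).filter
              (fun F => (⟨0, hNpos⟩ : Fin N) ∈ F),
            clgStartProb (insert S F) ⟨0, hNpos⟩) /
          (((((homed N Λ Λ).erase S).powersetCard ℓ).filter
              (fun F => (⟨0, hNpos⟩ : Fin N) ∈ F)).card : ℚ)) / ((N : ℚ) - 1) ∧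
    (∑ S ∈ Finset.univ.erase (⟨0, hNpos⟩ : Fin N),
        (∑ F ∈ (((homed N Λ Λ).erase S).powersetCard ℓ).filter
            (fun F => (⟨0, hNpos⟩ : Fin N) ∈ F),
          clgStartProb (insert S F) ⟨0, hNpos⟩) /
        (((((homed N Λ Λ).erase S).powersetCard ℓ).filter
            (fun F => (⟨0, hNpos⟩ : Fin N) ∈ F)).card : ℚ)) / ((N : ℚ) - 1)
      ≤ (1 / (ℓ + 1) : ℚ) * (1 + 1 / (η : ℚ)) := by
  classical
  have hηpos : 0 < η := by omega
  have hηℓ : ℓ + 1 ≤ η := by omega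
  set z0 : Fin N := ⟨0, hNpos⟩ with hz0def
  set H : Finset (Fin N) := homed N Λ Λ with hHdef
  have hz0H : z0 ∈ H := z0_mem_homed hNpos hΛ
  have hcardH : H.card = η := card_homed hN hNpos hΛ
  have hN2 : 2 ≤ N := by
    rw [hN]; calc 2 ≤ η := hη
      _ = η * 1 := (Nat.mul_one η).symm
      _ ≤ η * Λ := Nat.mul_le_mul_left η hΛ
  -- cast abbreviations
  set ηq : ℚ := (η : ℚ) with hηq
  set ℓq : ℚ := (ℓ : ℚ) with hℓq
  set Λq : ℚ := (Λ : ℚ) with hΛq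
  have hηq1 : (1 : ℚ) ≤ ηq := by rw [hηq]; exact_mod_cast hηpos
  have hℓq1 : (1 : ℚ) ≤ ℓq := by rw [hℓq]; exact_mod_cast hℓ1
  have hΛq1 : (1 : ℚ) ≤ Λq := by rw [hΛq]; exact_mod_cast hΛ
  have hηqℓ : ℓq + 1 ≤ ηq := by rw [hηq, hℓq]; exact_mod_cast hηℓ
  -- binomial coefficients
  set Kq : ℚ := (η.choose ℓ : ℚ) with hKq
  set K1q : ℚ := (η.choose (ℓ + 1) : ℚ) with hK1q
  set Cmq : ℚ := ((η - 1).choose ℓ : ℚ) with hCmq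
  set c1q : ℚ := ((η - 1).choose (ℓ - 1) : ℚ) with hc1q
  set c2q : ℚ := ((η - 2).choose (ℓ - 1) : ℚ) with hc2q
  have hc1pos : 0 < c1q := by
    rw [hc1q]; exact_mod_cast Nat.choose_pos (by omega)
  have hc2pos : 0 < c2q := by
    rw [hc2q]; exact_mod_cast Nat.choose_pos (by omega)
  have hI1 : (ℓq + 1) * K1q = ηq * Cmq := by
    have h := Nat.add_one_mul_choose_eq (η - 1) ℓ
    rw [show η - 1 + 1 = η by omega] at h
    rw [hℓq, hK1q, hηq, hCmq]
    exact_mod_cast by rw [Nat.mul_comm (η.choose (ℓ+1)) (ℓ+1)] at h; exact h.symm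
  have hI2 : ℓq * Cmq = (ηq - 1) * c2q := by
    have h := Nat.add_one_mul_choose_eq (η - 2) (ℓ - 1)
    rw [show η - 2 + 1 = η - 1 by omega, show ℓ - 1 + 1 = ℓ by omega] at h
    -- h : (η - 1) * (η-2).choose (ℓ-1) = (η-1).choose ℓ * ℓ
    rw [hℓq, hηq, hCmq, hc2q]
    have hcast : ((η - 1 : ℕ) : ℚ) = (η : ℚ) - 1 := by
      rw [Nat.cast_sub (by omega), Nat.cast_one]
    rw [← hcast]
    exact_mod_cast by rw [Nat.mul_comm ((η-1).choose ℓ) ℓ] at h; exact h.symm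
  have hI3 : ℓq * Kq = ηq * c1q := by
    have h := Nat.add_one_mul_choose_eq (η - 1) (ℓ - 1)
    rw [show η - 1 + 1 = η by omega, show ℓ - 1 + 1 = ℓ by omega] at h
    rw [hℓq, hηq, hKq, hc1q]
    exact_mod_cast by rw [Nat.mul_comm (η.choose ℓ) ℓ] at h; exact h.symm
  have hI4 : ℓq * Cmq = (ηq - ℓq) * c1q := by
    have h := Nat.choose_succ_right_eq (η - 1) (ℓ - 1)
    rw [show ℓ - 1 + 1 = ℓ by omega, show η - 1 - (ℓ - 1) = η - ℓ by omega] at h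
    rw [hℓq, hηq, hCmq, hc1q]
    have hcast : ((η - ℓ : ℕ) : ℚ) = (η : ℚ) - ℓ := by
      rw [Nat.cast_sub (by omega)]
    rw [← hcast]
    exact_mod_cast by
      rw [Nat.mul_comm ((η-1).choose ℓ) ℓ, Nat.mul_comm ((η-1).choose (ℓ-1)) (η - ℓ)] at h
      exact h
  -- split of the sender set
  have hsplit : Finset.univ.erase z0 = (H.erase z0) ∪ (Finset.univ \ H) := by
    ext x
    simp only [Finset.mem_erase, Finset.mem_univ, and_true, Finset.mem_union,
      Finset.mem_sdiff, true_and]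
    constructor
    · intro hx
      by_cases hxH : x ∈ H
      · exact Or.inl ⟨hx, hxH⟩
      · exact Or.inr hxH
    · rintro (⟨h1, _⟩ | h1)
      · exact h1
      · exact fun h => h1 (h ▸ hz0H)
  have hdisj : Disjoint (H.erase z0) (Finset.univ \ H) := by
    rw [Finset.disjoint_left]
    intro a ha hb
    exact (Finset.mem_sdiff.mp hb).2 (Finset.mem_of_mem_erase ha)
  rw [hsplit, Finset.sum_union hdisj]
  -- ============ homed part ============
  have hhomedcard : ∀ S ∈ H.erase z0,
      (((((H.erase S).powersetCard ℓ).filter (fun F => z0 ∈ F)).card : ℚ)) = c2q := by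
    intro S hS
    rw [Finset.mem_erase] at hS
    have hz0mem : z0 ∈ H.erase S := Finset.mem_erase.mpr ⟨fun h => hS.1 h.symm, hz0H⟩
    rw [hc2q]
    congr 1
    rw [show ℓ = (ℓ - 1) + 1 by omega, card_filter_powerset _ _ hz0mem (ℓ - 1),
      Finset.card_erase_of_mem hz0mem, Finset.card_erase_of_mem hS.2, hcardH]
    congr 1 <;> omega
  have hhomed : ∑ S ∈ H.erase z0,
      (∑ F ∈ ((H.erase S).powersetCard ℓ).filter (fun F => z0 ∈ F),
        clgStartProb (insert S F) z0) /
      (((((H.erase S).powersetCard ℓ).filter (fun F => z0 ∈ F)).card : ℚ))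
      = (ηq - 1) / (ℓq + 1) := by
    have hstep : ∀ S ∈ H.erase z0,
        (∑ F ∈ ((H.erase S).powersetCard ℓ).filter (fun F => z0 ∈ F),
          clgStartProb (insert S F) z0) /
        (((((H.erase S).powersetCard ℓ).filter (fun F => z0 ∈ F)).card : ℚ))
        = (∑ F ∈ ((H.erase S).powersetCard ℓ).filter (fun F => z0 ∈ F),
          clgStartProb (insert S F) z0) / c2q := by
      intro S hS
      rw [hhomedcard S hS]
    rw [Finset.sum_congr rfl hstep, ← Finset.sum_div, sum_pairs_z0 H z0 hz0H ℓ]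
    set X0 : ℚ := ∑ A ∈ (H.powersetCard (ℓ + 1)).filter (fun A => z0 ∈ A),
      clgStartProb A z0 with hX0def
    have hinner : ∑ A ∈ (H.powersetCard (ℓ + 1)).filter (fun A => z0 ∈ A),
        ∑ _ ∈ A.erase z0, clgStartProb A z0 = ℓq * X0 := by
      have h1 : ∀ A ∈ (H.powersetCard (ℓ + 1)).filter (fun A => z0 ∈ A),
          (∑ _ ∈ A.erase z0, clgStartProb A z0) = ℓq * clgStartProb A z0 := by
        intro A hA
        rw [Finset.mem_filter, Finset.mem_powersetCard] at hA
        rw [Finset.sum_const, Finset.card_erase_of_mem hA.2, hA.1.2, nsmul_eq_mul]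
        have hc : ((ℓ + 1 - 1 : ℕ) : ℚ) = ℓq := by rw [hℓq]; norm_num
        rw [hc]
      rw [Finset.sum_congr rfl h1, ← Finset.mul_sum, hX0def]
    rw [hinner]
    have hX0 : ηq * X0 = K1q := by
      have hrot : ∀ z ∈ H, X0 = ∑ A ∈ (H.powersetCard (ℓ + 1)).filter (fun A => z ∈ A),
          clgStartProb A z := by
        intro z hz
        rw [hX0def]
        exact rot_filter_sum hN hNpos hΛ (ℓ + 1) hz
      calc ηq * X0 = (H.card : ℚ) * X0 := by rw [hcardH, hηq]
        _ = ∑ _ ∈ H, X0 := by rw [Finset.sum_const, nsmul_eq_mul]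
        _ = ∑ z ∈ H, ∑ A ∈ (H.powersetCard (ℓ + 1)).filter (fun A => z ∈ A),
              clgStartProb A z := Finset.sum_congr rfl hrot
        _ = ∑ A ∈ H.powersetCard (ℓ + 1), ∑ z ∈ A, clgStartProb A z :=
              swap_filter H (ℓ + 1) (fun A z => clgStartProb A z)
        _ = ((H.powersetCard (ℓ + 1)).card : ℚ) := sum_clg_powerset (ℓ + 1) (by omega) H
        _ = K1q := by rw [Finset.card_powersetCard, hcardH, hK1q]
    have hℓ1pos : (0 : ℚ) < ℓq + 1 := by linarith
    have hη0 : (0 : ℚ) < ηq := by linarith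
    rw [div_eq_div_iff (ne_of_gt hc2pos) (ne_of_gt hℓ1pos)]
    have hX0v : X0 = K1q / ηq := by
      rw [eq_div_iff (ne_of_gt hη0)]
      linarith [hX0]
    rw [hX0v]
    field_simp
    linear_combination ℓq * hI1 + ηq * hI2
  -- ============ nonhomed part ============
  have hnonhomedcard : ∀ S ∈ Finset.univ \ H,
      (((((H.erase S).powersetCard ℓ).filter (fun F => z0 ∈ F)).card : ℚ)) = c1q := by
    intro S hS
    rw [Finset.mem_sdiff] at hS
    rw [Finset.erase_eq_of_notMem hS.2, hc1q]
    congr 1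
    rw [show ℓ = (ℓ - 1) + 1 by omega, card_filter_powerset _ _ hz0H (ℓ - 1),
      Finset.card_erase_of_mem hz0H, hcardH]
    congr 1 <;> omega
  set W0 : ℚ := ∑ S ∈ Finset.univ \ H,
    ∑ F ∈ (H.powersetCard ℓ).filter (fun F => z0 ∈ F),
      clgStartProb (insert S F) z0 with hW0def
  have hnonhomed : ∑ S ∈ Finset.univ \ H,
      (∑ F ∈ ((H.erase S).powersetCard ℓ).filter (fun F => z0 ∈ F),
        clgStartProb (insert S F) z0) /
      (((((H.erase S).powersetCard ℓ).filter (fun F => z0 ∈ F)).card : ℚ))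
      = W0 / c1q := by
    have hstep : ∀ S ∈ Finset.univ \ H,
        (∑ F ∈ ((H.erase S).powersetCard ℓ).filter (fun F => z0 ∈ F),
          clgStartProb (insert S F) z0) /
        (((((H.erase S).powersetCard ℓ).filter (fun F => z0 ∈ F)).card : ℚ))
        = (∑ F ∈ (H.powersetCard ℓ).filter (fun F => z0 ∈ F),
          clgStartProb (insert S F) z0) / c1q := by
      intro S hS
      rw [hnonhomedcard S hS, Finset.erase_eq_of_notMem (Finset.mem_sdiff.mp hS).2]
    rw [Finset.sum_congr rfl hstep, ← Finset.sum_div, hW0def]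
  set SD : ℚ := ∑ F ∈ H.powersetCard ℓ, ∑ S ∈ Finset.univ \ H,
    clgStartProb (insert S F) S with hSDdef
  have hUcard : ((Finset.univ \ H).card : ℚ) = (N : ℚ) - ηq := by
    rw [Finset.card_sdiff_of_subset (Finset.subset_univ H), Finset.card_univ, Fintype.card_fin,
      hcardH, Nat.cast_sub (by rw [hN]; exact Nat.le_mul_of_pos_right η hΛ), hηq]
  have hW0 : ηq * W0 = ((N : ℚ) - ηq) * Kq - SD := by
    have hrot : ∀ z ∈ H, W0 = ∑ S ∈ Finset.univ \ H,
        ∑ F ∈ (H.powersetCard ℓ).filter (fun F => z ∈ F),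
          clgStartProb (insert S F) z := by
      intro z hz
      rw [hW0def]
      exact rot_pair_sum hN hNpos hΛ ℓ hz
    have hswap : ∀ S ∈ Finset.univ \ H,
        ∑ z ∈ H, ∑ F ∈ (H.powersetCard ℓ).filter (fun F => z ∈ F),
          clgStartProb (insert S F) z
        = ∑ F ∈ H.powersetCard ℓ, ((1 : ℚ) - clgStartProb (insert S F) S) := by
      intro S hS
      rw [swap_filter H ℓ (fun F z => clgStartProb (insert S F) z)]
      apply Finset.sum_congr rfl
      intro F hF
      rw [Finset.mem_powersetCard] at hF
      have hSF : S ∉ F := fun h => (Finset.mem_sdiff.mp hS).2 (hF.1 h)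
      have htot : ∑ z ∈ insert S F, clgStartProb (insert S F) z = 1 :=
        sum_clg (Finset.insert_nonempty _ _)
      rw [Finset.sum_insert hSF] at htot
      linarith [htot]
    calc ηq * W0 = (H.card : ℚ) * W0 := by rw [hcardH, hηq]
      _ = ∑ _ ∈ H, W0 := by rw [Finset.sum_const, nsmul_eq_mul]
      _ = ∑ z ∈ H, ∑ S ∈ Finset.univ \ H,
            ∑ F ∈ (H.powersetCard ℓ).filter (fun F => z ∈ F),
              clgStartProb (insert S F) z := Finset.sum_congr rfl hrot
      _ = ∑ S ∈ Finset.univ \ H, ∑ z ∈ H,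
            ∑ F ∈ (H.powersetCard ℓ).filter (fun F => z ∈ F),
              clgStartProb (insert S F) z := Finset.sum_comm
      _ = ∑ S ∈ Finset.univ \ H, ∑ F ∈ H.powersetCard ℓ,
            ((1 : ℚ) - clgStartProb (insert S F) S) := Finset.sum_congr rfl hswap
      _ = ((N : ℚ) - ηq) * Kq - SD := by
          rw [hSDdef, Finset.sum_comm (s := H.powersetCard ℓ) (t := Finset.univ \ H)]
          have h1 : ∀ S ∈ Finset.univ \ H,
              ∑ F ∈ H.powersetCard ℓ, ((1 : ℚ) - clgStartProb (insert S F) S)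
              = Kq - ∑ F ∈ H.powersetCard ℓ, clgStartProb (insert S F) S := by
            intro S _
            rw [Finset.sum_sub_distrib, Finset.sum_const, nsmul_eq_mul, mul_one,
              Finset.card_powersetCard, hcardH, hKq]
          rw [Finset.sum_congr rfl h1, Finset.sum_sub_distrib, Finset.sum_const,
            nsmul_eq_mul, hUcard]
  -- bounds on SD
  have hSDH : ∑ F ∈ H.powersetCard ℓ, ∑ s ∈ H \ F, clgStartProb (insert s F) s = K1q := by
    rw [sum_insert_pairs H ℓ, sum_clg_powerset (ℓ + 1) (by omega) H,
      Finset.card_powersetCard, hcardH, hK1q]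
  have hFne : ∀ F ∈ H.powersetCard ℓ, F.Nonempty ∧ F ⊆ homed N Λ Λ := by
    intro F hF
    rw [Finset.mem_powersetCard] at hF
    exact ⟨Finset.card_pos.mp (by omega), hF.1⟩
  have hSDlo : (Λq - 1) * K1q ≤ SD := by
    calc (Λq - 1) * K1q
        = ∑ F ∈ H.powersetCard ℓ, (Λq - 1) * ∑ s ∈ H \ F, clgStartProb (insert s F) s := by
          rw [← Finset.mul_sum, hSDH]
      _ ≤ SD := by
          rw [hSDdef]
          apply Finset.sum_le_sum
          intro F hF
          exact step6_lower hN hΛ (hFne F hF).1 (hFne F hF).2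
  have hSDup : SD ≤ (Λq - 1) * (K1q + Kq) := by
    calc SD ≤ ∑ F ∈ H.powersetCard ℓ,
          (Λq - 1) * ((∑ s ∈ H \ F, clgStartProb (insert s F) s) + 1) := by
          rw [hSDdef]
          apply Finset.sum_le_sum
          intro F hF
          exact step6_upper hN hΛ (hFne F hF).1 (hFne F hF).2
      _ = (Λq - 1) * (K1q + Kq) := by
          rw [← Finset.mul_sum, Finset.sum_add_distrib, hSDH, Finset.sum_const,
            nsmul_eq_mul, mul_one, Finset.card_powersetCard, hcardH, hKq]
  -- final arithmetic
  rw [hhomed, hnonhomed]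
  have hNq : (N : ℚ) = ηq * Λq := by rw [hηq, hΛq, hN]; push_cast; ring
  have hN1pos : (0 : ℚ) < (N : ℚ) - 1 := by
    have h2 : (2 : ℚ) ≤ (N : ℚ) := by exact_mod_cast hN2
    linarith
  have hℓ1pos : (0 : ℚ) < ℓq + 1 := by linarith
  have hη0 : (0 : ℚ) < ηq := by linarith
  have hℓ0 : (0 : ℚ) < ℓq := by linarith
  have hK1v : ℓq * (ℓq + 1) * K1q = ηq * (ηq - ℓq) * c1q := by
    linear_combination ℓq * hI1 + ηq * hI4
  have hBup : W0 / c1q ≤ (Λq - 1) * (ηq + 1) / (ℓq + 1) := by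
    rw [div_le_div_iff₀ hc1pos hℓ1pos]
    apply le_of_mul_le_mul_left _ (show (0 : ℚ) < ηq * ℓq by positivity)
    calc ηq * ℓq * (W0 * (ℓq + 1)) = ℓq * (ℓq + 1) * (ηq * W0) := by ring
      _ = ℓq * (ℓq + 1) * (((N : ℚ) - ηq) * Kq - SD) := by rw [hW0]
      _ ≤ ℓq * (ℓq + 1) * (((N : ℚ) - ηq) * Kq - (Λq - 1) * K1q) := by
          have h0 : (0 : ℚ) ≤ ℓq * (ℓq + 1) := by positivity
          have h1 : ((N : ℚ) - ηq) * Kq - SD ≤ ((N : ℚ) - ηq) * Kq - (Λq - 1) * K1q := by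
            linarith
          exact mul_le_mul_of_nonneg_left h1 h0
      _ = ηq * ℓq * ((Λq - 1) * (ηq + 1) * c1q) := by
          rw [hNq]
          linear_combination (Λq - 1) * (ℓq + 1) * ηq * hI3 - (Λq - 1) * hK1v
  have hBlo : (Λq - 1) * (ηq * ℓq - 1) / (ℓq * (ℓq + 1)) ≤ W0 / c1q := by
    rw [div_le_div_iff₀ (show (0 : ℚ) < ℓq * (ℓq + 1) by positivity) hc1pos]
    apply le_of_mul_le_mul_left _ hη0
    calc ηq * ((Λq - 1) * (ηq * ℓq - 1) * c1q)
        = ℓq * (ℓq + 1) * (((N : ℚ) - ηq) * Kq - (Λq - 1) * (K1q + Kq)) := by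
          rw [hNq]
          linear_combination (-((Λq - 1) * (ℓq + 1) * (ηq - 1))) * hI3 + (Λq - 1) * hK1v
      _ ≤ ℓq * (ℓq + 1) * (((N : ℚ) - ηq) * Kq - SD) := by
          have h0 : (0 : ℚ) ≤ ℓq * (ℓq + 1) := by positivity
          have h1 : ((N : ℚ) - ηq) * Kq - (Λq - 1) * (K1q + Kq)
              ≤ ((N : ℚ) - ηq) * Kq - SD := by linarith
          exact mul_le_mul_of_nonneg_left h1 h0
      _ = ℓq * (ℓq + 1) * (ηq * W0) := by rw [hW0]
      _ = ηq * (W0 * (ℓq * (ℓq + 1))) := by ring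
  constructor
  · rw [le_div_iff₀ hN1pos]
    have key : 1 / (ℓq + 1) * (1 - 1 / (ℓq * ηq)) * ((N : ℚ) - 1)
        ≤ (ηq - 1) / (ℓq + 1) + (Λq - 1) * (ηq * ℓq - 1) / (ℓq * (ℓq + 1)) := by
      rw [hNq]
      have heq : (ηq - 1) / (ℓq + 1) + (Λq - 1) * (ηq * ℓq - 1) / (ℓq * (ℓq + 1))
          - 1 / (ℓq + 1) * (1 - 1 / (ℓq * ηq)) * (ηq * Λq - 1)
          = (ηq - 1) / (ℓq * ηq * (ℓq + 1)) := by
        field_simp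
        ring
      have hpos : (0 : ℚ) ≤ (ηq - 1) / (ℓq * ηq * (ℓq + 1)) :=
        div_nonneg (by linarith) (by positivity)
      linarith
    linarith [hBlo, key]
  · rw [div_le_iff₀ hN1pos]
    have key : (ηq - 1) / (ℓq + 1) + (Λq - 1) * (ηq + 1) / (ℓq + 1)
        ≤ 1 / (ℓq + 1) * (1 + 1 / ηq) * ((N : ℚ) - 1) := by
      rw [hNq]
      have heq : 1 / (ℓq + 1) * (1 + 1 / ηq) * (ηq * Λq - 1)
          - ((ηq - 1) / (ℓq + 1) + (Λq - 1) * (ηq + 1) / (ℓq + 1))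
          = (ηq - 1) / (ηq * (ℓq + 1)) := by
        field_simp
        ring
      have hpos : (0 : ℚ) ≤ (ηq - 1) / (ηq * (ℓq + 1)) :=
        div_nonneg (by linarith) (by positivity)
      linarith
    linarith [hBup, key]


end
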